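/- There exists no bi-unitary perfect polynomial A over 𝔽₄ with ω(A) = 3, i.e. with exactly three distinct monic irreducible factors. -/

import Mathlib

open Polynomial
open scoped Classical

noncomputable section

/-- The field with four elements. -/
abbrev F4 : Type := GaloisField 2 2

/-- `D` is a unitary divisor of `S`: `D ∣ S` and `gcd(D, S / D) = 1`. -/
def IsUnitaryDivisor (D S : F4[X]) : Prop :=
  D ∣ S ∧ IsCoprime D (S / D)

/-- The greatest common unitary divisor of `S` and `T`: a monic common unitary
divisor of `S` and `T` of maximal degree. -/
noncomputable def gcdU (S T : F4[X]) : F4[X] :=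
  if h : ∃ D : F4[X], D.Monic ∧ IsUnitaryDivisor D S ∧ IsUnitaryDivisor D T ∧
      ∀ E : F4[X], E.Monic → IsUnitaryDivisor E S → IsUnitaryDivisor E T →
        E.degree ≤ D.degree
  then h.choose else 0

/-- `D` is a bi-unitary divisor of `S`: `D ∣ S` and `gcd_u(D, S / D) = 1`. -/
def IsBiunitaryDivisor (D S : F4[X]) : Prop :=
  D ∣ S ∧ gcdU D (S / D) = 1

/-- `σ(S)`: the sum of all monic divisors of `S`. -/
noncomputable def sigma' (S : F4[X]) : F4[X] :=
  ∑ᶠ D ∈ {D : F4[X] | D.Monic ∧ D ∣ S}, D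

/-- `σ**(S)`: the sum of all monic bi-unitary divisors of `S`. -/
noncomputable def sigmaBU (S : F4[X]) : F4[X] :=
  ∑ᶠ D ∈ {D : F4[X] | D.Monic ∧ IsBiunitaryDivisor D S}, D

/-- `S` is perfect if `σ(S) = S`. -/
def IsPerfect (S : F4[X]) : Prop := sigma' S = S

/-- `S` is bi-unitary perfect if `σ**(S) = S`. -/
def IsBUPerfect (S : F4[X]) : Prop := sigmaBU S = S

/-- `ω(S)`: the number of distinct monic irreducible factors of `S`. -/
noncomputable def omegaCount (S : F4[X]) : ℕ :=
  Set.ncard {P : F4[X] | P.Monic ∧ Irreducible P ∧ P ∣ S}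

/-- `Ω₁`: `P` and `P + 1` are both irreducible. -/
def Omega1 (P : F4[X]) : Prop :=
  Irreducible P ∧ Irreducible (P + 1)

/-- `Ω₂`: `P`, `P + 1`, `P³ + P + 1` and `P³ + P² + 1` are all irreducible. -/
def Omega2 (P : F4[X]) : Prop :=
  Irreducible P ∧ Irreducible (P + 1) ∧
    Irreducible (P ^ 3 + P + 1) ∧ Irreducible (P ^ 3 + P ^ 2 + 1)

/-- A bi-unitary perfect polynomial is indecomposable if it has no proper
(monic, nontrivial) divisor which is bi-unitary perfect. -/
def IsIndecomposable (A : F4[X]) : Prop :=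
  ¬ ∃ D : F4[X], D.Monic ∧ D ∣ A ∧ D ≠ 1 ∧ D ≠ A ∧ IsBUPerfect D



noncomputable instance : Fintype F4 := Fintype.ofFinite _

lemma F4card : Fintype.card F4 = 4 := by
  have := GaloisField.card 2 2 (by norm_num)
  simpa [Nat.card_eq_fintype_card] using this

lemma F4two : (2 : F4[X]) = 0 := CharTwo.two_eq_zero

structure MI (P : F4[X]) : Prop where
  monic : P.Monic
  irr : Irreducible P

lemma MI.ne_zero {P : F4[X]} (h : MI P) : P ≠ 0 := h.monic.ne_zero
lemma MI.prime {P : F4[X]} (h : MI P) : Prime P :=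
  UniqueFactorizationMonoid.irreducible_iff_prime.mp h.irr
lemma MI.natDegree_pos {P : F4[X]} (h : MI P) : 0 < P.natDegree :=
  h.monic.natDegree_pos.mpr (fun h1 => h.irr.not_isUnit (h1 ▸ isUnit_one))
lemma MI.not_unit {P : F4[X]} (h : MI P) : ¬ IsUnit P := h.irr.not_isUnit

lemma monic_assoc_eq {f g : F4[X]} (hf : f.Monic) (hg : g.Monic) (h : Associated f g) : f = g :=
  Polynomial.eq_of_monic_of_associated hf hg h

lemma mi_dvd_mi {P Q : F4[X]} (hP : MI P) (hQ : MI Q) (h : P ∣ Q) : P = Q :=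
  monic_assoc_eq hP.monic hQ.monic (hP.irr.associated_of_dvd hQ.irr h)

lemma mi_coprime {P Q : F4[X]} (hP : MI P) (hQ : MI Q) (hne : P ≠ Q) : IsCoprime P Q :=
  (hP.irr.coprime_iff_not_dvd).mpr (fun hdvd => hne (mi_dvd_mi hP hQ hdvd))

lemma mul_div_cancel_left_poly {D W : F4[X]} (hD : D ≠ 0) : D * W / D = W := by
  have h := EuclideanDomain.mul_div_cancel' (a := D * W) (b := D) hD ⟨W, rfl⟩
  exact mul_left_cancel₀ hD h

lemma div_of_eq_mul {S D W : F4[X]} (hD : D ≠ 0) (h : S = D * W) : S / D = W := by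
  rw [h, mul_div_cancel_left_poly hD]

lemma unitC {u : F4} (hu : u ≠ 0) : IsUnit (C u : F4[X]) :=
  Polynomial.isUnit_C.mpr (isUnit_iff_ne_zero.mpr hu)

lemma isCoprime_unit_mul_right {x y : F4[X]} {u : F4} (hu : u ≠ 0) :
    IsCoprime x (C u * y) ↔ IsCoprime x y :=
  mul_comm y (C u) ▸ isCoprime_mul_unit_right_right (unitC hu) x y

lemma dvd_unit_mul_right {x y : F4[X]} {u : F4} (hu : u ≠ 0) :
    x ∣ C u * y ↔ x ∣ y := by
  constructor
  · intro h
    have : x ∣ C u⁻¹ * (C u * y) := Dvd.dvd.mul_left h _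
    rwa [← mul_assoc, ← C_mul, inv_mul_cancel₀ hu, C_1, one_mul] at this
  · exact fun h => h.mul_left _

/-- product of a multiset all of whose elements are P, Q or R -/
lemma multiset_prod_three {P Q R : F4[X]} (M : Multiset F4[X])
    (h : ∀ x ∈ M, x = P ∨ x = Q ∨ x = R) :
    ∃ i j k : ℕ, M.prod = P ^ i * Q ^ j * R ^ k := by
  induction M using Multiset.induction with
  | empty => exact ⟨0, 0, 0, by simp⟩
  | cons x M ih =>
    obtain ⟨i, j, k, hijk⟩ := ih (fun y hy => h y (Multiset.mem_cons_of_mem hy))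
    rcases h x (Multiset.mem_cons_self x M) with rfl | rfl | rfl
    · exact ⟨i + 1, j, k, by rw [Multiset.prod_cons, hijk]; ring⟩
    · exact ⟨i, j + 1, k, by rw [Multiset.prod_cons, hijk]; ring⟩
    · exact ⟨i, j, k + 1, by rw [Multiset.prod_cons, hijk]; ring⟩

/-- representation: a monic polynomial all of whose monic irreducible divisors
are among {P, Q, R} is a product of powers of P, Q, R. -/
lemma rep3 {P Q R D : F4[X]} (hD : D.Monic)
    (hfac : ∀ π : F4[X], π.Monic → Irreducible π → π ∣ D → π = P ∨ π = Q ∨ π = R) :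
    ∃ i j k : ℕ, D = P ^ i * Q ^ j * R ^ k := by
  classical
  have hD0 : D ≠ 0 := hD.ne_zero
  set M := UniqueFactorizationMonoid.normalizedFactors D with hM
  have hprod : Associated M.prod D := UniqueFactorizationMonoid.prod_normalizedFactors hD0
  have hmem : ∀ x ∈ M, x = P ∨ x = Q ∨ x = R := by
    intro x hx
    have hirr : Irreducible x := UniqueFactorizationMonoid.irreducible_of_normalized_factor x hx
    have hmon : x.Monic := by
      have hnx : normalize x = x := UniqueFactorizationMonoid.normalize_normalized_factor x hx
      have := monic_normalize (p := x) hirr.ne_zero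
      rwa [hnx] at this
    exact hfac x hmon hirr (UniqueFactorizationMonoid.dvd_of_mem_normalizedFactors hx)
  obtain ⟨i, j, k, hijk⟩ := multiset_prod_three M hmem
  have hMmon : M.prod.Monic := by
    have : (Multiset.map id M).prod.Monic := by
      apply monic_multiset_prod_of_monic
      intro x hx
      have hnx : normalize x = x := UniqueFactorizationMonoid.normalize_normalized_factor x hx
      have := monic_normalize (p := x)
        (UniqueFactorizationMonoid.irreducible_of_normalized_factor x hx).ne_zero
      rwa [hnx] at this
    simpa using this
  exact ⟨i, j, k, (monic_assoc_eq hMmon hD hprod).symm ▸ hijk ▸ rfl⟩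

section Chunk2

variable {P Q R : F4[X]}

lemma cop_pow_pow {i j : ℕ} (h : IsCoprime P Q) : IsCoprime (P ^ i) (Q ^ j) :=
  (h.pow_left).pow_right

lemma cop3 (hP : MI P) (hQ : MI Q) (hR : MI R) (hPQ : P ≠ Q) (hPR : P ≠ R) (hQR : Q ≠ R)
    {x1 y1 z1 x2 y2 z2 : ℕ} (hx : x1 = 0 ∨ x2 = 0) (hy : y1 = 0 ∨ y2 = 0)
    (hz : z1 = 0 ∨ z2 = 0) :
    IsCoprime (P ^ x1 * Q ^ y1 * R ^ z1) (P ^ x2 * Q ^ y2 * R ^ z2) := by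
  have cPP : IsCoprime (P ^ x1) (P ^ x2) := by
    rcases hx with h | h
    · rw [h, pow_zero]; exact isCoprime_one_left
    · rw [h, pow_zero]; exact isCoprime_one_right
  have cQQ : IsCoprime (Q ^ y1) (Q ^ y2) := by
    rcases hy with h | h
    · rw [h, pow_zero]; exact isCoprime_one_left
    · rw [h, pow_zero]; exact isCoprime_one_right
  have cRR : IsCoprime (R ^ z1) (R ^ z2) := by
    rcases hz with h | h
    · rw [h, pow_zero]; exact isCoprime_one_left
    · rw [h, pow_zero]; exact isCoprime_one_right
  have cPQ : IsCoprime P Q := mi_coprime hP hQ hPQ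
  have cPR : IsCoprime P R := mi_coprime hP hR hPR
  have cQR : IsCoprime Q R := mi_coprime hQ hR hQR
  have h1 : IsCoprime (P ^ x1) (P ^ x2 * Q ^ y2 * R ^ z2) :=
    (cPP.mul_right (cop_pow_pow cPQ)).mul_right (cop_pow_pow cPR)
  have h2 : IsCoprime (Q ^ y1) (P ^ x2 * Q ^ y2 * R ^ z2) :=
    ((cop_pow_pow cPQ.symm).mul_right cQQ).mul_right (cop_pow_pow cQR)
  have h3 : IsCoprime (R ^ z1) (P ^ x2 * Q ^ y2 * R ^ z2) :=
    ((cop_pow_pow cPR.symm).mul_right (cop_pow_pow cQR.symm)).mul_right cRR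
  exact (h1.mul_left h2).mul_left h3

lemma pow_dvd_bound {V : F4[X]} {i a : ℕ} (hP : MI P) (hcop : IsCoprime P V)
    (h : P ^ i ∣ P ^ a * V) : i ≤ a := by
  have : IsCoprime (P ^ i) V := hcop.pow_left
  have hd : P ^ i ∣ P ^ a := this.dvd_of_dvd_mul_right h
  exact (pow_dvd_pow_iff hP.ne_zero hP.not_unit).mp hd

lemma mi_dvd_ppows (hP : MI P) (hQ : MI Q) (hR : MI R) {π : F4[X]} (hπ : MI π)
    {x y z : ℕ} (h : π ∣ P ^ x * Q ^ y * R ^ z) : π = P ∨ π = Q ∨ π = R := by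
  rcases (hπ.prime.dvd_mul).mp h with h1 | h1
  · rcases (hπ.prime.dvd_mul).mp h1 with h2 | h2
    · exact Or.inl (mi_dvd_mi hπ hP (hπ.prime.dvd_of_dvd_pow h2))
    · exact Or.inr (Or.inl (mi_dvd_mi hπ hQ (hπ.prime.dvd_of_dvd_pow h2)))
  · exact Or.inr (Or.inr (mi_dvd_mi hπ hR (hπ.prime.dvd_of_dvd_pow h1)))

lemma expo_le1 (hP : MI P) (hQ : MI Q) (hR : MI R) (hPQ : P ≠ Q) (hPR : P ≠ R)
    {i j k i' j' k' : ℕ} (h : P ^ i * Q ^ j * R ^ k = P ^ i' * Q ^ j' * R ^ k') :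
    i ≤ i' := by
  apply pow_dvd_bound hP
    (((mi_coprime hP hQ hPQ).pow_right).mul_right ((mi_coprime hP hR hPR).pow_right) :
      IsCoprime P (Q ^ j' * R ^ k'))
  have : P ^ i ∣ P ^ i * Q ^ j * R ^ k := Dvd.intro (Q ^ j * R ^ k) (by ring)
  rw [h] at this
  rwa [mul_assoc] at this

lemma expo_eq (hP : MI P) (hQ : MI Q) (hR : MI R) (hPQ : P ≠ Q) (hPR : P ≠ R) (hQR : Q ≠ R)
    {i j k i' j' k' : ℕ} (h : P ^ i * Q ^ j * R ^ k = P ^ i' * Q ^ j' * R ^ k') :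
    i = i' ∧ j = j' ∧ k = k' := by
  have hQform : Q ^ j * P ^ i * R ^ k = Q ^ j' * P ^ i' * R ^ k' := by
    rw [show Q ^ j * P ^ i * R ^ k = P ^ i * Q ^ j * R ^ k from by ring, h]; ring
  have hRform : R ^ k * Q ^ j * P ^ i = R ^ k' * Q ^ j' * P ^ i' := by
    rw [show R ^ k * Q ^ j * P ^ i = P ^ i * Q ^ j * R ^ k from by ring, h]; ring
  exact ⟨le_antisymm (expo_le1 hP hQ hR hPQ hPR h) (expo_le1 hP hQ hR hPQ hPR h.symm),
    le_antisymm (expo_le1 hQ hP hR hPQ.symm hQR hQform)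
      (expo_le1 hQ hP hR hPQ.symm hQR hQform.symm),
    le_antisymm (expo_le1 hR hQ hP hQR.symm hPR.symm hRform)
      (expo_le1 hR hQ hP hQR.symm hPR.symm hRform.symm)⟩

end Chunk2

section Chunk3

lemma monic_eq_one_of_degree_le_zero {E : F4[X]} (hE : E.Monic) (h : E.degree ≤ 0) : E = 1 := by
  have h1 : E.natDegree = 0 := Polynomial.natDegree_eq_zero_iff_degree_le_zero.mpr h
  exact hE.natDegree_eq_zero.mp h1

lemma one_unitary (S : F4[X]) : IsUnitaryDivisor 1 S :=
  ⟨one_dvd _, isCoprime_one_left⟩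

lemma gcdU_eq_one_iff (S T : F4[X]) :
    gcdU S T = 1 ↔ ∀ E : F4[X], E.Monic → IsUnitaryDivisor E S → IsUnitaryDivisor E T → E = 1 := by
  constructor
  · intro h1 E hEmon hES hET
    by_cases h : ∃ D : F4[X], D.Monic ∧ IsUnitaryDivisor D S ∧ IsUnitaryDivisor D T ∧
        ∀ E : F4[X], E.Monic → IsUnitaryDivisor E S → IsUnitaryDivisor E T →
          E.degree ≤ D.degree
    · have hval : gcdU S T = h.choose := by rw [gcdU, dif_pos h]
      obtain ⟨hmon, hUS, hUT, hmax⟩ := h.choose_spec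
      have hdeg := hmax E hEmon hES hET
      rw [hval] at h1
      rw [h1] at hdeg
      exact monic_eq_one_of_degree_le_zero hEmon (by simpa using hdeg)
    · exfalso
      have hval : gcdU S T = 0 := by rw [gcdU, dif_neg h]
      rw [hval] at h1
      exact one_ne_zero h1.symm
  · intro hall
    have h : ∃ D : F4[X], D.Monic ∧ IsUnitaryDivisor D S ∧ IsUnitaryDivisor D T ∧
        ∀ E : F4[X], E.Monic → IsUnitaryDivisor E S → IsUnitaryDivisor E T →
          E.degree ≤ D.degree := by
      refine ⟨1, monic_one, one_unitary S, one_unitary T, ?_⟩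
      intro E hE h1 h2
      rw [hall E hE h1 h2]
    have hval : gcdU S T = h.choose := by rw [gcdU, dif_pos h]
    obtain ⟨hmon, hUS, hUT, hmax⟩ := h.choose_spec
    rw [hval]
    exact hall _ hmon hUS hUT

end Chunk3

section Chunk3b

variable {P Q R : F4[X]}

lemma ppp_monic (hP : MI P) (hQ : MI Q) (hR : MI R) (i j k : ℕ) :
    (P ^ i * Q ^ j * R ^ k).Monic :=
  ((hP.monic.pow _).mul (hQ.monic.pow _)).mul (hR.monic.pow _)

lemma pow_split {x' x : ℕ} (P : F4[X]) (h : x' ≤ x) : P ^ x = P ^ x' * P ^ (x - x') := by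
  rw [← pow_add, Nat.add_sub_cancel' h]

lemma udvd_of_shape (hP : MI P) (hQ : MI Q) (hR : MI R) (hPQ : P ≠ Q) (hPR : P ≠ R)
    (hQR : Q ≠ R) {x y z x' y' z' : ℕ}
    (hx : x' = 0 ∨ x' = x) (hy : y' = 0 ∨ y' = y) (hz : z' = 0 ∨ z' = z) :
    IsUnitaryDivisor (P ^ x' * Q ^ y' * R ^ z') (P ^ x * Q ^ y * R ^ z) := by
  have hx' : x' ≤ x := by rcases hx with h | h <;> omega
  have hy' : y' ≤ y := by rcases hy with h | h <;> omega
  have hz' : z' ≤ z := by rcases hz with h | h <;> omega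
  have hsplit : P ^ x * Q ^ y * R ^ z
      = (P ^ x' * Q ^ y' * R ^ z') * (P ^ (x - x') * Q ^ (y - y') * R ^ (z - z')) := by
    rw [pow_split P hx', pow_split Q hy', pow_split R hz']; ring
  refine ⟨⟨_, hsplit⟩, ?_⟩
  rw [div_of_eq_mul (ppp_monic hP hQ hR x' y' z').ne_zero hsplit]
  apply cop3 hP hQ hR hPQ hPR hQR
  · rcases hx with h | h
    · exact Or.inl h
    · exact Or.inr (by omega)
  · rcases hy with h | h
    · exact Or.inl h
    · exact Or.inr (by omega)
  · rcases hz with h | h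
    · exact Or.inl h
    · exact Or.inr (by omega)

lemma udvd_unit_mul {u : F4} (hu : u ≠ 0) {E Y : F4[X]} (hE : E ≠ 0) :
    IsUnitaryDivisor E (C u * Y) ↔ IsUnitaryDivisor E Y := by
  constructor
  · rintro ⟨hdvd, hcop⟩
    have hdvd' : E ∣ Y := (dvd_unit_mul_right hu).mp hdvd
    obtain ⟨Z, hZ⟩ := hdvd'
    refine ⟨⟨Z, hZ⟩, ?_⟩
    rw [div_of_eq_mul hE hZ]
    have hsplit : C u * Y = E * (C u * Z) := by rw [hZ]; ring
    rw [div_of_eq_mul hE hsplit] at hcop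
    exact (isCoprime_unit_mul_right hu).mp hcop
  · rintro ⟨hdvd, hcop⟩
    obtain ⟨Z, hZ⟩ := hdvd
    have hsplit : C u * Y = E * (C u * Z) := by rw [hZ]; ring
    refine ⟨⟨C u * Z, hsplit⟩, ?_⟩
    rw [div_of_eq_mul hE hsplit]
    rw [div_of_eq_mul hE hZ] at hcop
    exact (isCoprime_unit_mul_right hu).mpr hcop

lemma udvd_shape (hP : MI P) (hQ : MI Q) (hR : MI R) (hPQ : P ≠ Q) (hPR : P ≠ R)
    (hQR : Q ≠ R) {x y z : ℕ} {E : F4[X]} (hE : E.Monic)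
    (h : IsUnitaryDivisor E (P ^ x * Q ^ y * R ^ z)) :
    ∃ x' y' z', (x' = 0 ∨ x' = x) ∧ (y' = 0 ∨ y' = y) ∧ (z' = 0 ∨ z' = z) ∧
      E = P ^ x' * Q ^ y' * R ^ z' := by
  obtain ⟨hdvd, hcop⟩ := h
  obtain ⟨x', y', z', rfl⟩ := rep3 hE
    (fun π h1 h2 h3 => mi_dvd_ppows hP hQ hR ⟨h1, h2⟩ (h3.trans hdvd))
  have hx' : x' ≤ x := by
    apply pow_dvd_bound hP (((mi_coprime hP hQ hPQ).pow_right).mul_right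
      ((mi_coprime hP hR hPR).pow_right) : IsCoprime P (Q ^ y * R ^ z))
    rw [← mul_assoc]
    exact (Dvd.intro (Q ^ y' * R ^ z') (by ring)).trans hdvd
  have hy' : y' ≤ y := by
    apply pow_dvd_bound hQ (((mi_coprime hQ hP hPQ.symm).pow_right).mul_right
      ((mi_coprime hQ hR hQR).pow_right) : IsCoprime Q (P ^ x * R ^ z))
    have hrw : Q ^ y * (P ^ x * R ^ z) = P ^ x * Q ^ y * R ^ z := by ring
    rw [hrw]
    exact (Dvd.intro (P ^ x' * R ^ z') (by ring)).trans hdvd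
  have hz' : z' ≤ z := by
    apply pow_dvd_bound hR (((mi_coprime hR hP hPR.symm).pow_right).mul_right
      ((mi_coprime hR hQ hQR.symm).pow_right) : IsCoprime R (P ^ x * Q ^ y))
    have hrw : R ^ z * (P ^ x * Q ^ y) = P ^ x * Q ^ y * R ^ z := by ring
    rw [hrw]
    exact (Dvd.intro (P ^ x' * Q ^ y') (by ring)).trans hdvd
  have hsplit : P ^ x * Q ^ y * R ^ z
      = (P ^ x' * Q ^ y' * R ^ z') * (P ^ (x - x') * Q ^ (y - y') * R ^ (z - z')) := by
    rw [pow_split P hx', pow_split Q hy', pow_split R hz']; ring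
  rw [div_of_eq_mul (ppp_monic hP hQ hR x' y' z').ne_zero hsplit] at hcop
  refine ⟨x', y', z', ?_, ?_, ?_, rfl⟩
  · by_contra hc
    push_neg at hc
    obtain ⟨hc1, hc2⟩ := hc
    have d1 : P ∣ P ^ x' * Q ^ y' * R ^ z' :=
      (dvd_pow_self P hc1).trans (Dvd.intro (Q ^ y' * R ^ z') (by ring))
    have d2 : P ∣ P ^ (x - x') * Q ^ (y - y') * R ^ (z - z') :=
      (dvd_pow_self P (by omega : x - x' ≠ 0)).trans
        (Dvd.intro (Q ^ (y - y') * R ^ (z - z')) (by ring))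
    exact hP.not_unit (hcop.isUnit_of_dvd' d1 d2)
  · by_contra hc
    push_neg at hc
    obtain ⟨hc1, hc2⟩ := hc
    have d1 : Q ∣ P ^ x' * Q ^ y' * R ^ z' :=
      (dvd_pow_self Q hc1).trans (Dvd.intro (P ^ x' * R ^ z') (by ring))
    have d2 : Q ∣ P ^ (x - x') * Q ^ (y - y') * R ^ (z - z') :=
      (dvd_pow_self Q (by omega : y - y' ≠ 0)).trans
        (Dvd.intro (P ^ (x - x') * R ^ (z - z')) (by ring))
    exact hQ.not_unit (hcop.isUnit_of_dvd' d1 d2)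
  · by_contra hc
    push_neg at hc
    obtain ⟨hc1, hc2⟩ := hc
    have d1 : R ∣ P ^ x' * Q ^ y' * R ^ z' :=
      (dvd_pow_self R hc1).trans (Dvd.intro (P ^ x' * Q ^ y') (by ring))
    have d2 : R ∣ P ^ (x - x') * Q ^ (y - y') * R ^ (z - z') :=
      (dvd_pow_self R (by omega : z - z' ≠ 0)).trans
        (Dvd.intro (P ^ (x - x') * Q ^ (y - y')) (by ring))
    exact hR.not_unit (hcop.isUnit_of_dvd' d1 d2)

lemma ppow_ne_one (hP : MI P) {i : ℕ} (hi : i ≠ 0) : P ^ i ≠ 1 := by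
  intro h
  have := congrArg Polynomial.natDegree h
  rw [Polynomial.natDegree_pow, Polynomial.natDegree_one] at this
  have h2 := hP.natDegree_pos
  rcases Nat.mul_eq_zero.mp this with h3 | h3
  · exact hi h3
  · omega

lemma bu_char (hP : MI P) (hQ : MI Q) (hR : MI R) (hPQ : P ≠ Q) (hPR : P ≠ R) (hQR : Q ≠ R)
    {u : F4} (hu : u ≠ 0) {a b e : ℕ} {D : F4[X]} (hD : D.Monic) :
    IsBiunitaryDivisor D (C u * (P ^ a * Q ^ b * R ^ e)) ↔
      ∃ i j k : ℕ, i ≤ a ∧ j ≤ b ∧ k ≤ e ∧ (i = 0 ∨ 2 * i ≠ a) ∧ (j = 0 ∨ 2 * j ≠ b) ∧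
        (k = 0 ∨ 2 * k ≠ e) ∧ D = P ^ i * Q ^ j * R ^ k := by
  constructor
  · rintro ⟨hdvd, hgcd⟩
    have hdvdW : D ∣ P ^ a * Q ^ b * R ^ e := (dvd_unit_mul_right hu).mp hdvd
    obtain ⟨i, j, k, rfl⟩ := rep3 hD
      (fun π h1 h2 h3 => mi_dvd_ppows hP hQ hR ⟨h1, h2⟩ (h3.trans hdvdW))
    have hia : i ≤ a := by
      apply pow_dvd_bound hP (((mi_coprime hP hQ hPQ).pow_right).mul_right
        ((mi_coprime hP hR hPR).pow_right) : IsCoprime P (Q ^ b * R ^ e))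
      rw [← mul_assoc]
      exact (Dvd.intro (Q ^ j * R ^ k) (by ring)).trans hdvdW
    have hjb : j ≤ b := by
      apply pow_dvd_bound hQ (((mi_coprime hQ hP hPQ.symm).pow_right).mul_right
        ((mi_coprime hQ hR hQR).pow_right) : IsCoprime Q (P ^ a * R ^ e))
      have hrw : Q ^ b * (P ^ a * R ^ e) = P ^ a * Q ^ b * R ^ e := by ring
      rw [hrw]
      exact (Dvd.intro (P ^ i * R ^ k) (by ring)).trans hdvdW
    have hke : k ≤ e := by
      apply pow_dvd_bound hR (((mi_coprime hR hP hPR.symm).pow_right).mul_right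
        ((mi_coprime hR hQ hQR.symm).pow_right) : IsCoprime R (P ^ a * Q ^ b))
      have hrw : R ^ e * (P ^ a * Q ^ b) = P ^ a * Q ^ b * R ^ e := by ring
      rw [hrw]
      exact (Dvd.intro (P ^ i * Q ^ j) (by ring)).trans hdvdW
    have hsplit : C u * (P ^ a * Q ^ b * R ^ e)
        = (P ^ i * Q ^ j * R ^ k) * (C u * (P ^ (a - i) * Q ^ (b - j) * R ^ (e - k))) := by
      rw [pow_split P hia, pow_split Q hjb, pow_split R hke]; ring
    rw [div_of_eq_mul hD.ne_zero hsplit] at hgcd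
    have hall := (gcdU_eq_one_iff _ _).mp hgcd
    refine ⟨i, j, k, hia, hjb, hke, ?_, ?_, ?_, rfl⟩
    · by_contra hc
      push_neg at hc
      obtain ⟨hc1, hc2⟩ := hc
      have h1 : IsUnitaryDivisor (P ^ i * Q ^ 0 * R ^ 0) (P ^ i * Q ^ j * R ^ k) :=
        udvd_of_shape hP hQ hR hPQ hPR hQR (Or.inr rfl) (Or.inl rfl) (Or.inl rfl)
      have h2 : IsUnitaryDivisor (P ^ i * Q ^ 0 * R ^ 0)
          (C u * (P ^ (a - i) * Q ^ (b - j) * R ^ (e - k))) := by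
        rw [udvd_unit_mul hu (ppp_monic hP hQ hR i 0 0).ne_zero]
        exact udvd_of_shape hP hQ hR hPQ hPR hQR (Or.inr (by omega)) (Or.inl rfl) (Or.inl rfl)
      have := hall _ (ppp_monic hP hQ hR i 0 0) h1 h2
      rw [pow_zero, pow_zero, mul_one, mul_one] at this
      exact ppow_ne_one hP hc1 this
    · by_contra hc
      push_neg at hc
      obtain ⟨hc1, hc2⟩ := hc
      have h1 : IsUnitaryDivisor (P ^ 0 * Q ^ j * R ^ 0) (P ^ i * Q ^ j * R ^ k) :=
        udvd_of_shape hP hQ hR hPQ hPR hQR (Or.inl rfl) (Or.inr rfl) (Or.inl rfl)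
      have h2 : IsUnitaryDivisor (P ^ 0 * Q ^ j * R ^ 0)
          (C u * (P ^ (a - i) * Q ^ (b - j) * R ^ (e - k))) := by
        rw [udvd_unit_mul hu (ppp_monic hP hQ hR 0 j 0).ne_zero]
        exact udvd_of_shape hP hQ hR hPQ hPR hQR (Or.inl rfl) (Or.inr (by omega)) (Or.inl rfl)
      have := hall _ (ppp_monic hP hQ hR 0 j 0) h1 h2
      rw [pow_zero, pow_zero, one_mul, mul_one] at this
      exact ppow_ne_one hQ hc1 this
    · by_contra hc
      push_neg at hc
      obtain ⟨hc1, hc2⟩ := hc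
      have h1 : IsUnitaryDivisor (P ^ 0 * Q ^ 0 * R ^ k) (P ^ i * Q ^ j * R ^ k) :=
        udvd_of_shape hP hQ hR hPQ hPR hQR (Or.inl rfl) (Or.inl rfl) (Or.inr rfl)
      have h2 : IsUnitaryDivisor (P ^ 0 * Q ^ 0 * R ^ k)
          (C u * (P ^ (a - i) * Q ^ (b - j) * R ^ (e - k))) := by
        rw [udvd_unit_mul hu (ppp_monic hP hQ hR 0 0 k).ne_zero]
        exact udvd_of_shape hP hQ hR hPQ hPR hQR (Or.inl rfl) (Or.inl rfl) (Or.inr (by omega))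
      have := hall _ (ppp_monic hP hQ hR 0 0 k) h1 h2
      rw [pow_zero, pow_zero, one_mul, one_mul] at this
      exact ppow_ne_one hR hc1 this
  · rintro ⟨i, j, k, hia, hjb, hke, hcond1, hcond2, hcond3, rfl⟩
    have hsplit : C u * (P ^ a * Q ^ b * R ^ e)
        = (P ^ i * Q ^ j * R ^ k) * (C u * (P ^ (a - i) * Q ^ (b - j) * R ^ (e - k))) := by
      rw [pow_split P hia, pow_split Q hjb, pow_split R hke]; ring
    refine ⟨⟨_, hsplit⟩, ?_⟩
    rw [div_of_eq_mul (ppp_monic hP hQ hR i j k).ne_zero hsplit]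
    apply (gcdU_eq_one_iff _ _).mpr
    intro E hE h1 h2
    have h2' : IsUnitaryDivisor E (P ^ (a - i) * Q ^ (b - j) * R ^ (e - k)) :=
      (udvd_unit_mul hu hE.ne_zero).mp h2
    obtain ⟨x', y', z', hx', hy', hz', rfl⟩ := udvd_shape hP hQ hR hPQ hPR hQR hE h1
    obtain ⟨x'', y'', z'', hx'', hy'', hz'', heq⟩ := udvd_shape hP hQ hR hPQ hPR hQR hE h2'
    obtain ⟨hxe, hye, hze⟩ := expo_eq hP hQ hR hPQ hPR hQR heq
    have hx0 : x' = 0 := by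
      subst hxe; rcases hcond1 with h | h <;> rcases hx' with h3 | h3 <;>
        rcases hx'' with h4 | h4 <;> omega
    have hy0 : y' = 0 := by
      subst hye; rcases hcond2 with h | h <;> rcases hy' with h3 | h3 <;>
        rcases hy'' with h4 | h4 <;> omega
    have hz0 : z' = 0 := by
      subst hze; rcases hcond3 with h | h <;> rcases hz' with h3 | h3 <;>
        rcases hz'' with h4 | h4 <;> omega
    rw [hx0, hy0, hz0]
    simp

end Chunk3b

section Chunk4

variable {P Q R : F4[X]}

/-- index set for bi-unitary divisor exponents -/
noncomputable def Ifin (a : ℕ) : Finset ℕ :=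
  (Finset.range (a + 1)).filter (fun i => i = 0 ∨ 2 * i ≠ a)

lemma mem_Ifin {i a : ℕ} : i ∈ Ifin a ↔ i ≤ a ∧ (i = 0 ∨ 2 * i ≠ a) := by
  simp [Ifin, Nat.lt_succ_iff]

/-- the bi-unitary sigma of a prime power, as an explicit sum -/
noncomputable def sigP (P : F4[X]) (a : ℕ) : F4[X] := ∑ i ∈ Ifin a, P ^ i

lemma sum_triple (Ia Ib Ie : Finset ℕ) :
    ∑ x ∈ Ia ×ˢ Ib ×ˢ Ie, P ^ x.1 * Q ^ x.2.1 * R ^ x.2.2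
      = (∑ i ∈ Ia, P ^ i) * (∑ j ∈ Ib, Q ^ j) * (∑ k ∈ Ie, R ^ k) := by
  symm
  calc (∑ i ∈ Ia, P ^ i) * (∑ j ∈ Ib, Q ^ j) * (∑ k ∈ Ie, R ^ k)
      = ∑ i ∈ Ia, P ^ i * ((∑ j ∈ Ib, Q ^ j) * (∑ k ∈ Ie, R ^ k)) := by
        rw [mul_assoc, Finset.sum_mul]
    _ = ∑ i ∈ Ia, ∑ j ∈ Ib, P ^ i * Q ^ j * (∑ k ∈ Ie, R ^ k) := by
        refine Finset.sum_congr rfl fun i _ => ?_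
        rw [Finset.sum_mul, Finset.mul_sum]
        exact Finset.sum_congr rfl fun j _ => by ring
    _ = ∑ i ∈ Ia, ∑ j ∈ Ib, ∑ k ∈ Ie, P ^ i * Q ^ j * R ^ k := by
        refine Finset.sum_congr rfl fun i _ => Finset.sum_congr rfl fun j _ => ?_
        rw [Finset.mul_sum]
    _ = ∑ x ∈ Ia ×ˢ Ib ×ˢ Ie, P ^ x.1 * Q ^ x.2.1 * R ^ x.2.2 := by
        rw [Finset.sum_product]
        refine Finset.sum_congr rfl fun i _ => ?_
        rw [Finset.sum_product]

lemma buSet_eq (hP : MI P) (hQ : MI Q) (hR : MI R) (hPQ : P ≠ Q) (hPR : P ≠ R) (hQR : Q ≠ R)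
    {u : F4} (hu : u ≠ 0) (a b e : ℕ) :
    {D : F4[X] | D.Monic ∧ IsBiunitaryDivisor D (C u * (P ^ a * Q ^ b * R ^ e))} =
      ↑((Ifin a ×ˢ Ifin b ×ˢ Ifin e).image
        (fun x : ℕ × ℕ × ℕ => P ^ x.1 * Q ^ x.2.1 * R ^ x.2.2)) := by
  ext D
  simp only [Set.mem_setOf_eq, Finset.coe_image, Set.mem_image, Finset.mem_coe,
    Finset.mem_product, mem_Ifin]
  constructor
  · rintro ⟨hD, hbu⟩
    obtain ⟨i, j, k, hia, hjb, hke, h1, h2, h3, rfl⟩ :=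
      (bu_char hP hQ hR hPQ hPR hQR hu hD).mp hbu
    exact ⟨(i, j, k), ⟨⟨hia, h1⟩, ⟨hjb, h2⟩, ⟨hke, h3⟩⟩, rfl⟩
  · rintro ⟨⟨i, j, k⟩, ⟨⟨hia, h1⟩, ⟨hjb, h2⟩, ⟨hke, h3⟩⟩, rfl⟩
    refine ⟨ppp_monic hP hQ hR i j k, ?_⟩
    exact (bu_char hP hQ hR hPQ hPR hQR hu (ppp_monic hP hQ hR i j k)).mpr
      ⟨i, j, k, hia, hjb, hke, h1, h2, h3, rfl⟩

lemma sigmaBU_formula (hP : MI P) (hQ : MI Q) (hR : MI R) (hPQ : P ≠ Q) (hPR : P ≠ R)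
    (hQR : Q ≠ R) {u : F4} (hu : u ≠ 0) (a b e : ℕ) :
    sigmaBU (C u * (P ^ a * Q ^ b * R ^ e)) = sigP P a * sigP Q b * sigP R e := by
  have hset := buSet_eq hP hQ hR hPQ hPR hQR hu a b e
  have hinj : ∀ x ∈ Ifin a ×ˢ Ifin b ×ˢ Ifin e, ∀ y ∈ Ifin a ×ˢ Ifin b ×ˢ Ifin e,
      (fun x : ℕ × ℕ × ℕ => P ^ x.1 * Q ^ x.2.1 * R ^ x.2.2) x
        = (fun x : ℕ × ℕ × ℕ => P ^ x.1 * Q ^ x.2.1 * R ^ x.2.2) y → x = y := by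
    rintro ⟨i, j, k⟩ _ ⟨i', j', k'⟩ _ h
    obtain ⟨h1, h2, h3⟩ := expo_eq hP hQ hR hPQ hPR hQR h
    exact Prod.ext h1 (Prod.ext h2 h3)
  show (∑ᶠ D ∈ {D : F4[X] | D.Monic ∧
      IsBiunitaryDivisor D (C u * (P ^ a * Q ^ b * R ^ e))}, D) = _
  rw [hset, finsum_mem_coe_finset, Finset.sum_image hinj, sum_triple]
  rfl

lemma Ifin_odd {a : ℕ} (ha : Odd a) : Ifin a = Finset.range (a + 1) := by
  apply Finset.filter_true_of_mem
  intro i _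
  right
  obtain ⟨m, hm⟩ := ha
  omega

lemma Ifin_even_compl {a h : ℕ} (ha : a = 2 * h) (h1 : 1 ≤ h) :
    (Finset.range (a + 1)).filter (fun i => ¬(i = 0 ∨ 2 * i ≠ a)) = {h} := by
  ext i
  simp only [Finset.mem_filter, Finset.mem_range, Finset.mem_singleton]
  omega

lemma sigP_even_split {a h : ℕ} (ha : a = 2 * h) (h1 : 1 ≤ h) :
    sigP P a + P ^ h = ∑ i ∈ Finset.range (a + 1), P ^ i := by
  have := Finset.sum_filter_add_sum_filter_not (Finset.range (a + 1))
    (fun i => i = 0 ∨ 2 * i ≠ a) (fun i => P ^ i)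
  rw [Ifin_even_compl ha h1] at this
  simpa [sigP, Ifin] using this

lemma card_Ifin_even {a : ℕ} (ha : 1 ≤ a) : Even (Ifin a).card := by
  rcases Nat.even_or_odd a with he | ho
  · obtain ⟨h, hh⟩ := he
    have hh' : a = 2 * h := by omega
    have h1 : 1 ≤ h := by omega
    have hcard := Finset.card_filter_add_card_filter_not
      (s := Finset.range (a + 1)) (p := fun i => i = 0 ∨ 2 * i ≠ a)
    rw [Ifin_even_compl hh' h1] at hcard
    simp only [Finset.card_singleton, Finset.card_range] at hcard
    have : (Ifin a).card = a := by
      have : (Ifin a).card + 1 = a + 1 := by simpa [Ifin] using hcard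
      omega
    rw [this]
    exact ⟨h, by omega⟩
  · rw [Ifin_odd ho, Finset.card_range]
    obtain ⟨m, hm⟩ := ho
    exact ⟨m + 1, by omega⟩

lemma geom1 (P : F4[X]) (n : ℕ) : (∑ i ∈ Finset.range n, P ^ i) * (P + 1) = P ^ n + 1 := by
  have h := geom_sum_mul P n
  rwa [CharTwo.sub_eq_add, CharTwo.sub_eq_add] at h

lemma P1_dvd_pow_add_one (P : F4[X]) (n : ℕ) : (P + 1) ∣ P ^ n + 1 :=
  ⟨∑ i ∈ Finset.range n, P ^ i, by rw [← geom1 P n]; ring⟩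

lemma P1_dvd_sigP (hP : MI P) {a : ℕ} (ha : 1 ≤ a) : (P + 1) ∣ sigP P a := by
  have hdvd : (P + 1) ∣ ∑ i ∈ Ifin a, (P ^ i + 1) :=
    Finset.dvd_sum (fun i _ => P1_dvd_pow_add_one P i)
  have hsum : ∑ i ∈ Ifin a, (P ^ i + 1) = sigP P a + ((Ifin a).card : F4[X]) := by
    rw [Finset.sum_add_distrib, Finset.sum_const, sigP]
    congr 1
    rw [nsmul_eq_mul, mul_one]
  have hzero : ((Ifin a).card : F4[X]) = 0 := by
    have h2 : (2 : ℕ) ∣ (Ifin a).card := (card_Ifin_even ha).two_dvd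
    exact (CharP.cast_eq_zero_iff F4[X] 2 _).mpr h2
  rw [hsum, hzero, add_zero] at hdvd
  exact hdvd

lemma sigP_mul_odd {a : ℕ} (ha : Odd a) : sigP P a * (P + 1) = P ^ (a + 1) + 1 := by
  rw [sigP, Ifin_odd ha, geom1]

lemma sigP_mul_even {a h : ℕ} (ha : a = 2 * h) (h1 : 1 ≤ h) :
    sigP P a * (P + 1) = (P ^ (h + 1) + 1) * (P ^ h + 1) := by
  have hsplit := sigP_even_split (P := P) ha h1
  have hfull := geom1 P (a + 1)
  have h2 : sigP P a = (∑ i ∈ Finset.range (a + 1), P ^ i) + P ^ h := by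
    linear_combination hsplit - P ^ h * F4two
  rw [h2, add_mul, hfull]
  subst ha
  ring

/-- P does not divide sigP P a -/
lemma not_P_dvd_sigP (hP : MI P) (a : ℕ) : ¬ P ∣ sigP P a := by
  intro hdvd
  have h0 : (0 : ℕ) ∈ Ifin a := mem_Ifin.mpr ⟨Nat.zero_le a, Or.inl rfl⟩
  have hsum := Finset.add_sum_erase (Ifin a) (fun i => P ^ i) h0
  have hrest : P ∣ ∑ i ∈ (Ifin a).erase 0, P ^ i :=
    Finset.dvd_sum (fun i hi => dvd_pow_self P (Finset.ne_of_mem_erase hi))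
  have h1 : P ∣ (1 : F4[X]) := by
    have : (1 : F4[X]) = sigP P a + ∑ i ∈ (Ifin a).erase 0, P ^ i := by
      rw [sigP, ← hsum]
      simp only [pow_zero]
      linear_combination (-(∑ i ∈ (Ifin a).erase 0, P ^ i)) * F4two
    rw [this]
    exact dvd_add hdvd hrest
  exact hP.not_unit (isUnit_of_dvd_one h1)

/-- sigP is monic of degree a * deg P -/
lemma sigP_monic (hP : MI P) {a : ℕ} (ha : 1 ≤ a) : (sigP P a).Monic := by
  have hmem : a ∈ Ifin a := mem_Ifin.mpr ⟨le_refl a, Or.inr (by omega)⟩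
  have hsum := Finset.add_sum_erase (Ifin a) (fun i => P ^ i) hmem
  rw [sigP, ← hsum]
  apply Polynomial.Monic.add_of_left (hP.monic.pow a)
  have hbound : ∀ i ∈ (Ifin a).erase a, (P ^ i).degree < (P ^ a).degree := by
    intro i hi
    have hia : i < a := by
      have h1 := Finset.ne_of_mem_erase hi
      have h2 := (mem_Ifin.mp (Finset.mem_of_mem_erase hi)).1
      omega
    rw [Polynomial.degree_eq_natDegree (pow_ne_zero i hP.ne_zero),
      Polynomial.degree_eq_natDegree (pow_ne_zero a hP.ne_zero),
      Polynomial.natDegree_pow, Polynomial.natDegree_pow]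
    exact_mod_cast (Nat.mul_lt_mul_right hP.natDegree_pos).mpr hia
  calc (∑ i ∈ (Ifin a).erase a, P ^ i).degree
      ≤ ((Ifin a).erase a).sup (fun i => (P ^ i).degree) := Polynomial.degree_sum_le _ _
    _ < (P ^ a).degree := by
        rw [Finset.sup_lt_iff]
        · exact hbound
        · rw [Polynomial.degree_eq_natDegree (pow_ne_zero a hP.ne_zero)]
          exact WithBot.bot_lt_coe _

end Chunk4

section Chunk5a

/-- geometric sum polynomial over F4 -/
noncomputable def gs (n : ℕ) : F4[X] := ∑ i ∈ Finset.range n, X ^ i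

lemma gs_mul (n : ℕ) : gs n * (X - 1) = X ^ n - 1 := geom_sum_mul X n

lemma deg_sum_lt {s : Finset ℕ} {m : ℕ} (h : ∀ i ∈ s, i < m) :
    (∑ i ∈ s, (X : F4[X]) ^ i).degree < (m : ℕ) := by
  calc (∑ i ∈ s, (X : F4[X]) ^ i).degree ≤ s.sup (fun i => ((X : F4[X]) ^ i).degree) :=
        Polynomial.degree_sum_le _ _
    _ < (m : ℕ) := by
        rw [Finset.sup_lt_iff (by exact_mod_cast WithBot.bot_lt_coe m)]
        intro i hi
        rw [Polynomial.degree_X_pow]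
        exact_mod_cast h i hi

lemma gs_monic {n : ℕ} (hn : 1 ≤ n) : (gs n).Monic := by
  obtain ⟨m, rfl⟩ : ∃ m, n = m + 1 := ⟨n - 1, by omega⟩
  rw [gs, Finset.sum_range_succ]
  exact Polynomial.Monic.add_of_right (monic_X_pow m)
    (by rw [Polynomial.degree_X_pow]; exact deg_sum_lt (fun i hi => Finset.mem_range.mp hi))

lemma gs_degree {n : ℕ} (hn : 1 ≤ n) : (gs n).degree = ((n - 1 : ℕ) : WithBot ℕ) := by
  obtain ⟨m, rfl⟩ : ∃ m, n = m + 1 := ⟨n - 1, by omega⟩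
  rw [gs, Finset.sum_range_succ, add_comm]
  rw [Polynomial.degree_add_eq_left_of_degree_lt]
  · simp [Polynomial.degree_X_pow]
  · rw [Polynomial.degree_X_pow]
    exact deg_sum_lt (fun i hi => Finset.mem_range.mp hi)

lemma gs_natDegree {n : ℕ} (hn : 1 ≤ n) : (gs n).natDegree = n - 1 :=
  Polynomial.natDegree_eq_of_degree_eq_some (gs_degree hn)

lemma odd_cast_F4 {n : ℕ} (hodd : Odd n) : ((n : ℕ) : F4) = 1 := by
  obtain ⟨m, rfl⟩ := hodd
  push_cast
  have h2 : (2 : F4) = 0 := CharTwo.two_eq_zero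
  rw [h2]
  ring

lemma gs_squarefree {n : ℕ} (hodd : Odd n) (hn : 1 ≤ n) : Squarefree (gs n) := by
  have hsep : ((X : F4[X]) ^ n - C 1).Separable :=
    Polynomial.separable_X_pow_sub_C 1 (by rw [odd_cast_F4 hodd]; exact one_ne_zero) one_ne_zero
  have hsq : Squarefree ((X : F4[X]) ^ n - 1) := by
    have := hsep.squarefree
    rwa [map_one] at this
  exact Squarefree.squarefree_of_dvd ⟨X - 1, (gs_mul n).symm⟩ hsq

lemma gs_eval_one {n : ℕ} : (gs n).eval 1 = (n : F4) := by
  simp [gs, Polynomial.eval_finset_sum]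

lemma F4_pow_four_pow (c : F4) (m : ℕ) : c ^ (4 ^ m) = c := by
  induction m with
  | zero => simp
  | succ m ih =>
    have : (4 : ℕ) ^ (m + 1) = 4 ^ m * 4 := by ring
    rw [this, pow_mul, ih]
    have := FiniteField.pow_card c
    rwa [F4card] at this

lemma factG {n : ℕ} (hn : 3 ≤ n) (hodd : Odd n) : ¬ Irreducible (gs n) := by
  intro hirr
  haveI : Fact (Irreducible (gs n)) := ⟨hirr⟩
  set K := AdjoinRoot (gs n) with hK
  have hne : gs n ≠ 0 := (gs_monic (by omega)).ne_zero
  set pb := AdjoinRoot.powerBasis hne with hpb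
  haveI : Fintype K := Fintype.ofEquiv _ pb.basis.equivFun.toEquiv.symm
  haveI : CharP K 2 := charP_of_injective_algebraMap (algebraMap F4 K).injective 2
  have hdim : pb.dim = n - 1 := by
    show (gs n).natDegree = n - 1
    exact gs_natDegree (by omega)
  have hcardK : Fintype.card K = 4 ^ (n - 1) := by
    rw [Module.card_fintype pb.basis, F4card, Fintype.card_fin, hdim]
  -- the root and its power identity
  set y := AdjoinRoot.root (gs n) with hy
  have hy0 : (Polynomial.aeval y) (gs n) = 0 := by
    rw [AdjoinRoot.aeval_eq, AdjoinRoot.mk_self]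
  have hyn : y ^ n = 1 := by
    have h1 : (Polynomial.aeval y) (gs n * (X - 1)) = 0 := by
      rw [map_mul, hy0, zero_mul]
    rw [gs_mul] at h1
    have h2 : y ^ n - 1 = 0 := by simpa using h1
    have := sub_eq_zero.mp h2
    simpa using this
  -- Euler: n ∣ 2 ^ totient - 1
  set t := n.totient with ht
  have ht_even : Even t := Nat.totient_even (by omega)
  have ht_pos : 0 < t := Nat.totient_pos.mpr (by omega)
  have hcop : Nat.Coprime 2 n := by
    rw [Nat.Prime.coprime_iff_not_dvd Nat.prime_two]
    obtain ⟨m, rfl⟩ := hodd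
    omega
  have heuler : 2 ^ t ≡ 1 [MOD n] := Nat.ModEq.pow_totient hcop
  have hmod : 2 ^ t % n = 1 := by
    have h1 : (1 : ℕ) % n = 1 := Nat.mod_eq_of_lt (by omega)
    have := heuler
    rw [Nat.ModEq] at this
    rw [this, h1]
  obtain ⟨q, hq⟩ : ∃ q, 2 ^ t = n * q + 1 := by
    refine ⟨2 ^ t / n, ?_⟩
    have := Nat.div_add_mod (2 ^ t) n
    omega
  have hy2 : y ^ (2 ^ t) = y := by
    rw [hq, pow_add, pow_mul, pow_one, hyn, one_pow, one_mul]
  -- the subring of fixed points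
  set S : Subring K := {
    carrier := {z : K | z ^ (2 ^ t) = z}
    mul_mem' := by
      intro a b ha hb
      simp only [Set.mem_setOf_eq] at *
      rw [mul_pow, ha, hb]
    one_mem' := by simp
    add_mem' := by
      intro a b ha hb
      simp only [Set.mem_setOf_eq] at *
      rw [add_pow_char_pow, ha, hb]
    zero_mem' := by
      simp only [Set.mem_setOf_eq]
      exact zero_pow (by positivity)
    neg_mem' := by
      intro a ha
      simp only [Set.mem_setOf_eq] at *
      rw [CharTwo.neg_eq, ha]
  } with hS
  have halg : ∀ c : F4, algebraMap F4 K c ∈ S := by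
    intro c
    show (algebraMap F4 K c) ^ (2 ^ t) = algebraMap F4 K c
    rw [← map_pow]
    congr 1
    obtain ⟨m, hm⟩ := ht_even
    have h2t : (2 : ℕ) ^ t = 4 ^ m := by
      rw [show t = 2 * m from by omega, pow_mul]
      norm_num
    rw [h2t, F4_pow_four_pow]
  set S' : Subalgebra F4 K := {
    S.toSubsemiring with
    algebraMap_mem' := halg
  } with hS'
  have hyS : y ∈ S' := hy2
  have htop : (⊤ : Subalgebra F4 K) ≤ S' := by
    rw [← AdjoinRoot.adjoinRoot_eq_top (f := gs n)]
    exact Algebra.adjoin_le (by simpa using hyS)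
  -- counting roots of X^(2^t) - X
  set f : K[X] := X ^ (2 ^ t) - X with hf
  have hfdeg : f.degree = ((2 ^ t : ℕ) : WithBot ℕ) := by
    rw [hf]
    rw [Polynomial.degree_sub_eq_left_of_degree_lt]
    · exact Polynomial.degree_X_pow _
    · rw [Polynomial.degree_X_pow, Polynomial.degree_X]
      exact_mod_cast by
        have : 2 ≤ 2 ^ t := by
          calc 2 = 2 ^ 1 := by norm_num
          _ ≤ 2 ^ t := Nat.pow_le_pow_right (by norm_num) ht_pos
        omega
  have hf0 : f ≠ 0 := by
    intro h
    rw [h, Polynomial.degree_zero] at hfdeg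
    exact WithBot.bot_ne_coe hfdeg
  have hroots : ∀ z : K, z ∈ f.roots := by
    intro z
    rw [Polynomial.mem_roots hf0]
    have hz : z ∈ S' := htop (by trivial)
    have hz' : z ^ (2 ^ t) = z := hz
    show f.eval z = 0
    rw [hf]
    simp [hz']
  have hcount : Fintype.card K ≤ 2 ^ t := by
    have h1 : Finset.univ ⊆ f.roots.toFinset := by
      intro z _
      rw [Multiset.mem_toFinset]
      exact hroots z
    calc Fintype.card K = Finset.univ.card := rfl
      _ ≤ f.roots.toFinset.card := Finset.card_le_card h1
      _ ≤ Multiset.card f.roots := Multiset.toFinset_card_le _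
      _ ≤ f.natDegree := Polynomial.card_roots' f
      _ = 2 ^ t := Polynomial.natDegree_eq_of_degree_eq_some hfdeg
  -- contradiction
  rw [hcardK] at hcount
  have h4 : (4 : ℕ) ^ (n - 1) = 2 ^ (2 * (n - 1)) := by
    rw [pow_mul]; norm_num
  rw [h4] at hcount
  have hle : 2 * (n - 1) ≤ t := (Nat.pow_le_pow_iff_right (by norm_num)).mp hcount
  have hlt : t < n := Nat.totient_lt n (by omega)
  omega

end Chunk5a

section Chunk5b

open UniqueFactorizationMonoid

lemma nf_mi {D : F4[X]} {x : F4[X]} (hx : x ∈ normalizedFactors D) : MI x ∧ x ∣ D := by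
  have hirr : Irreducible x := irreducible_of_normalized_factor x hx
  have hnx : normalize x = x := normalize_normalized_factor x hx
  have hmon : x.Monic := by
    have := monic_normalize (p := x) hirr.ne_zero
    rwa [hnx] at this
  exact ⟨⟨hmon, hirr⟩, dvd_of_mem_normalizedFactors hx⟩

lemma nf_prod_monic {D : F4[X]} (hD : D.Monic) : (normalizedFactors D).prod = D := by
  have hprod : Associated (normalizedFactors D).prod D := prod_normalizedFactors hD.ne_zero
  have hMmon : (normalizedFactors D).prod.Monic := by
    have : (Multiset.map id (normalizedFactors D)).prod.Monic :=
      monic_multiset_prod_of_monic _ _ (fun x hx => (nf_mi hx).1.monic)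
    simpa using this
  exact monic_assoc_eq hMmon hD hprod

lemma rep2 {Q R D : F4[X]} (hD : D.Monic)
    (hfac : ∀ π : F4[X], π.Monic → Irreducible π → π ∣ D → π = Q ∨ π = R) :
    ∃ g d : ℕ, D = Q ^ g * R ^ d := by
  obtain ⟨i, j, k, h⟩ := rep3 (P := Q) (Q := R) (R := R) hD
    (fun π h1 h2 h3 => by
      rcases hfac π h1 h2 h3 with h | h
      · exact Or.inl h
      · exact Or.inr (Or.inl h))
  exact ⟨i, j + k, by rw [h, pow_add]; ring⟩

lemma comp_coprime {g h P : F4[X]} (hcop : IsCoprime g h) :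
    IsCoprime (g.comp P) (h.comp P) := by
  obtain ⟨u, v, huv⟩ := hcop
  exact ⟨u.comp P, v.comp P, by
    rw [← Polynomial.mul_comp, ← Polynomial.mul_comp, ← Polynomial.add_comp, huv,
      Polynomial.one_comp]⟩

lemma comp_dvd {g f P : F4[X]} (h : g ∣ f) : g.comp P ∣ f.comp P := by
  obtain ⟨c, rfl⟩ := h
  exact ⟨c.comp P, by rw [Polynomial.mul_comp]⟩

lemma natDegree_P1 {P : F4[X]} (hP : MI P) : (P + 1).natDegree = P.natDegree := by
  rw [← Polynomial.C_1, Polynomial.natDegree_add_C]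

lemma monic_P1 {P : F4[X]} (hP : MI P) : (P + 1).Monic := by
  apply Polynomial.Monic.add_of_left hP.monic
  rw [Polynomial.degree_one]
  exact Polynomial.natDegree_pos_iff_degree_pos.mp hP.natDegree_pos

/-- if a composition with `P` is a power of `P + 1` then the outer polynomial is
a power of `X + 1` -/
lemma comp_eq_pow_P1 {h P : F4[X]} (hh : h.Monic) (hP : MI P) {g : ℕ}
    (heq : h.comp P = (P + 1) ^ g) : h = (X + 1) ^ g := by
  have hdeg : h.natDegree = g := by
    have h1 : (h.comp P).natDegree = h.natDegree * P.natDegree := Polynomial.natDegree_comp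
    have h2 : ((P + 1) ^ g).natDegree = g * P.natDegree := by
      rw [Polynomial.natDegree_pow, natDegree_P1 hP]
    rw [heq, h2] at h1
    have := hP.natDegree_pos
    exact Nat.eq_of_mul_eq_mul_right this h1.symm
  have hw : (h - (X + 1) ^ g).comp P = 0 := by
    rw [Polynomial.sub_comp, Polynomial.pow_comp, Polynomial.add_comp, Polynomial.X_comp,
      Polynomial.one_comp, heq, sub_self]
  rcases Polynomial.comp_eq_zero_iff.mp hw with hw0 | ⟨_, hPc⟩
  · exact sub_eq_zero.mp hw0
  · exfalso
    have := hP.natDegree_pos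
    rw [hPc] at this
    simp at this

lemma eval_one_X1 : Polynomial.eval (1 : F4) (X + 1) = 0 := by
  simp [CharTwo.add_self_eq_zero]

/-- Master lemma: if all monic irreducible factors of P^n + 1 are among {P+1, R},
then R does not divide P^n + 1. -/
lemma ML {P R : F4[X]} (hP : MI P) (hQ : MI (P + 1)) (hR : MI R) (hRQ : R ≠ P + 1) :
    ∀ n : ℕ, 1 ≤ n →
      (∀ π : F4[X], π.Monic → Irreducible π → π ∣ P ^ n + 1 → π = P + 1 ∨ π = R) →
      ¬ R ∣ P ^ n + 1 := by
  intro n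
  induction n using Nat.strong_induction_on with
  | _ n ih =>
    intro hn hfac hdvd
    rcases Nat.lt_or_ge n 2 with h2 | h2
    · -- n = 1
      have hn1 : n = 1 := by omega
      subst hn1
      rw [pow_one] at hdvd
      exact hRQ (mi_dvd_mi hR hQ hdvd)
    rcases Nat.even_or_odd n with he | ho
    · -- even case: reduce
      obtain ⟨m, hm⟩ := he
      have hm1 : 1 ≤ m := by omega
      have hsq : P ^ n + 1 = (P ^ m + 1) ^ 2 := by
        have hc : (P ^ m + 1) ^ 2 = (P ^ m) ^ 2 + 1 ^ 2 := add_pow_char _ _ 2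
        rw [hc, ← pow_mul, one_pow, show m * 2 = n from by omega]
      have hfac' : ∀ π : F4[X], π.Monic → Irreducible π → π ∣ P ^ m + 1 →
          π = P + 1 ∨ π = R := by
        intro π a b c
        exact hfac π a b (by rw [hsq, sq]; exact c.mul_right _)
      have hRm : R ∣ P ^ m + 1 := by
        rw [hsq] at hdvd
        exact hR.prime.dvd_of_dvd_pow hdvd
      exact ih m (by omega) (by omega) hfac' hRm
    · -- odd case: outright contradiction
      have hn3 : 3 ≤ n := by
        obtain ⟨m', hm'⟩ := ho
        omega
      have hgsm : (gs n).Monic := gs_monic (by omega)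
      have hgsne : gs n ≠ 0 := hgsm.ne_zero
      have hcompid : ((gs n).comp P) * (P + 1) = P ^ n + 1 := by
        have h := congrArg (fun q : F4[X] => q.comp P) (gs_mul n)
        simp only [Polynomial.mul_comp, Polynomial.sub_comp, Polynomial.X_comp,
          Polynomial.one_comp, Polynomial.pow_comp] at h
        rwa [CharTwo.sub_eq_add, CharTwo.sub_eq_add] at h
      have hfacs : ∀ π : F4[X], π.Monic → Irreducible π → π ∣ (gs n).comp P →
          π = P + 1 ∨ π = R := by
        intro π a b c
        exact hfac π a b (by rw [← hcompid]; exact c.mul_right _)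
      -- normalized factors of gs n
      set M := normalizedFactors (gs n) with hM
      have hnodup : M.Nodup :=
        (squarefree_iff_nodup_normalizedFactors hgsne).mp (gs_squarefree ho (by omega))
      have hprodM : M.prod = gs n := nf_prod_monic hgsm
      -- at least two elements
      have hMne : M ≠ 0 := by
        intro h0
        rw [h0, Multiset.prod_zero] at hprodM
        have := gs_natDegree (n := n) (by omega)
        rw [← hprodM] at this
        simp at this
        omega
      obtain ⟨h1, hh1⟩ := Multiset.exists_mem_of_ne_zero hMne
      obtain ⟨M', hM'⟩ := Multiset.exists_cons_of_mem hh1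
      have hM'ne : M' ≠ 0 := by
        intro h0
        rw [hM', h0] at hprodM
        simp only [Multiset.prod_cons, Multiset.prod_zero, mul_one] at hprodM
        exact factG hn3 ho (hprodM ▸ (nf_mi hh1).1.irr)
      obtain ⟨h2e, hh2'⟩ := Multiset.exists_mem_of_ne_zero hM'ne
      have hh2 : h2e ∈ M := by rw [hM']; exact Multiset.mem_cons_of_mem hh2'
      have hne12 : h1 ≠ h2e := by
        intro heq
        rw [hM'] at hnodup
        exact (Multiset.nodup_cons.mp hnodup).1 (heq ▸ hh2')
      -- basic facts about each factor
      have hfact : ∀ h ∈ M, MI h ∧ h ∣ gs n := fun h hh => nf_mi hh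
      obtain ⟨hmi1, hdvd1⟩ := hfact h1 hh1
      obtain ⟨hmi2, hdvd2⟩ := hfact h2e hh2
      have hPnd : P.natDegree ≠ 0 := by
        have := hP.natDegree_pos; omega
      have hcomp_mon : ∀ h ∈ M, (h.comp P).Monic := by
        intro h hh
        exact ((hfact h hh).1.monic).comp hP.monic hPnd
      have hcomp_nc : ∀ h ∈ M, (h.comp P).natDegree ≠ 0 := by
        intro h hh
        rw [Polynomial.natDegree_comp]
        have := ((hfact h hh).1).natDegree_pos
        have := hP.natDegree_pos
        positivity
      have hcomp_dvd : ∀ h ∈ M, h.comp P ∣ (gs n).comp P := by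
        intro h hh
        exact comp_dvd (hfact h hh).2
      -- representations
      obtain ⟨g1, d1, e1⟩ := rep2 (hcomp_mon h1 hh1)
        (fun π a b c => hfacs π a b (c.trans (hcomp_dvd h1 hh1)))
      obtain ⟨g2, d2, e2⟩ := rep2 (hcomp_mon h2e hh2)
        (fun π a b c => hfacs π a b (c.trans (hcomp_dvd h2e hh2)))
      have hcop12 : IsCoprime (h1.comp P) (h2e.comp P) :=
        comp_coprime (mi_coprime hmi1 hmi2 hne12)
      -- not both divisible by P+1
      have hnotQQ : ¬ (1 ≤ g1 ∧ 1 ≤ g2) := by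
        rintro ⟨ha, hb⟩
        apply hQ.not_unit
        apply hcop12.isUnit_of_dvd'
        · rw [e1]; exact dvd_mul_of_dvd_left (dvd_pow_self _ (by omega)) _
        · rw [e2]; exact dvd_mul_of_dvd_left (dvd_pow_self _ (by omega)) _
      have hnotRR : ¬ (1 ≤ d1 ∧ 1 ≤ d2) := by
        rintro ⟨ha, hb⟩
        apply hR.not_unit
        apply hcop12.isUnit_of_dvd'
        · rw [e1]; exact dvd_mul_of_dvd_right (dvd_pow_self _ (by omega)) _
        · rw [e2]; exact dvd_mul_of_dvd_right (dvd_pow_self _ (by omega)) _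
      -- each factor is nonconstant so has g + d ≥ 1
      have hnz1 : ¬ (g1 = 0 ∧ d1 = 0) := by
        rintro ⟨ha, hb⟩
        rw [ha, hb] at e1
        simp only [pow_zero, mul_one] at e1
        exact (hcomp_nc h1 hh1) (by rw [e1]; simp)
      have hnz2 : ¬ (g2 = 0 ∧ d2 = 0) := by
        rintro ⟨ha, hb⟩
        rw [ha, hb] at e2
        simp only [pow_zero, mul_one] at e2
        exact (hcomp_nc h2e hh2) (by rw [e2]; simp)
      -- the (X+1)-power argument
      have hXarg : ∀ h ∈ M, ∀ g : ℕ, 1 ≤ g → h.comp P = (P + 1) ^ g → False := by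
        intro h hh g hg heq
        have hX1 : h = (X + 1) ^ g := comp_eq_pow_P1 ((hfact h hh).1.monic) hP heq
        have hX1dvd : (X + 1 : F4[X]) ∣ gs n := by
          have : (X + 1 : F4[X]) ∣ h := hX1 ▸ dvd_pow_self _ (by omega)
          exact this.trans (hfact h hh).2
        have heval : Polynomial.eval (1 : F4) (gs n) = 0 :=
          Polynomial.eval_eq_zero_of_dvd_of_eval_eq_zero hX1dvd eval_one_X1
        rw [gs_eval_one, odd_cast_F4 ho] at heval
        exact one_ne_zero heval
      -- case analysis
      rcases Nat.eq_zero_or_pos g1 with hg1 | hg1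
      · -- g1 = 0 : d1 ≥ 1
        have hd1 : 1 ≤ d1 := by omega
        rcases Nat.eq_zero_or_pos g2 with hg2 | hg2
        · have hd2 : 1 ≤ d2 := by omega
          exact hnotRR ⟨hd1, hd2⟩
        · rcases Nat.eq_zero_or_pos d2 with hd2 | hd2
          · apply hXarg h2e hh2 g2 hg2
            rw [e2, hd2]
            simp
          · exact hnotRR ⟨hd1, hd2⟩
      · -- g1 ≥ 1
        rcases Nat.eq_zero_or_pos d1 with hd1 | hd1
        · apply hXarg h1 hh1 g1 hg1
          rw [e1, hd1]
          simp
        · -- d1 ≥ 1 : then g2 = 0 and d2 ≥ 1 gives RR contra; g2 ≥ 1 gives QQ contra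
          rcases Nat.eq_zero_or_pos g2 with hg2 | hg2
          · have hd2 : 1 ≤ d2 := by omega
            exact hnotRR ⟨hd1, hd2⟩
          · exact hnotQQ ⟨hg1, hg2⟩

end Chunk5b

section Chunk6a

lemma mi_dvd_ppows2 {Q R π : F4[X]} (hQ : MI Q) (hR : MI R) (hπ : MI π)
    {x y : ℕ} (h : π ∣ Q ^ x * R ^ y) : π = Q ∨ π = R := by
  rcases (hπ.prime.dvd_mul).mp h with h1 | h1
  · exact Or.inl (mi_dvd_mi hπ hQ (hπ.prime.dvd_of_dvd_pow h1))
  · exact Or.inr (mi_dvd_mi hπ hR (hπ.prime.dvd_of_dvd_pow h1))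

lemma R_not_dvd_sigP {P R : F4[X]} (hP : MI P) (hQ : MI (P + 1)) (hR : MI R)
    (hRQ : R ≠ P + 1) {a : ℕ} (ha : 1 ≤ a) {γ δ : ℕ}
    (hrep : sigP P a = (P + 1) ^ γ * R ^ δ) : ¬ R ∣ sigP P a := by
  intro hdvd
  have hprod : sigP P a * (P + 1) = (P + 1) ^ (γ + 1) * R ^ δ := by
    rw [hrep]; ring
  have hfacn : ∀ π : F4[X], π.Monic → Irreducible π → π ∣ sigP P a * (P + 1) →
      π = P + 1 ∨ π = R := by
    intro π h1 h2 h3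
    rw [hprod] at h3
    exact mi_dvd_ppows2 hQ hR ⟨h1, h2⟩ h3
  rcases Nat.even_or_odd a with he | ho
  · obtain ⟨h0, hh0⟩ := he
    have hh : a = 2 * h0 := by omega
    have h1 : 1 ≤ h0 := by omega
    have hid : sigP P a * (P + 1) = (P ^ (h0 + 1) + 1) * (P ^ h0 + 1) :=
      sigP_mul_even hh h1
    have hRd : R ∣ (P ^ (h0 + 1) + 1) * (P ^ h0 + 1) := by
      rw [← hid]
      exact dvd_mul_of_dvd_left hdvd _
    rcases (hR.prime.dvd_mul).mp hRd with hc | hc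
    · exact ML hP hQ hR hRQ (h0 + 1) (by omega)
        (fun π a1 b1 c1 => hfacn π a1 b1 (by rw [hid]; exact c1.mul_right _)) hc
    · exact ML hP hQ hR hRQ h0 (by omega)
        (fun π a1 b1 c1 => hfacn π a1 b1
          (by rw [hid]; exact dvd_mul_of_dvd_right c1 _)) hc
  · have hid : sigP P a * (P + 1) = P ^ (a + 1) + 1 := sigP_mul_odd ho
    exact ML hP hQ hR hRQ (a + 1) (by omega)
      (fun π a1 b1 c1 => hfacn π a1 b1 (by rw [hid]; exact c1))
      (by rw [← hid]; exact dvd_mul_of_dvd_left hdvd _)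

lemma main_contra {P Q R : F4[X]} (hP : MI P) (hQ : MI Q) (hR : MI R)
    (hPQ : P ≠ Q) (hPR : P ≠ R) (hQR : Q ≠ R) (hQP1 : Q = P + 1)
    {u : F4} (hu : u ≠ 0) {a b e : ℕ} (ha : 1 ≤ a) (hb : 1 ≤ b) (he : 1 ≤ e)
    (heq : sigP P a * sigP Q b * sigP R e = C u * (P ^ a * Q ^ b * R ^ e))
    (hω : ∀ π : F4[X], π.Monic → Irreducible π → π ∣ C u * (P ^ a * Q ^ b * R ^ e) →
      π = P ∨ π = Q ∨ π = R) : False := by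
  have hQ' : MI (P + 1) := by rw [← hQP1]; exact hQ
  have hQ1P : Q + 1 = P := by rw [hQP1]; linear_combination F4two
  have hP' : MI (Q + 1) := by rw [hQ1P]; exact hP
  have hRQ1 : R ≠ P + 1 := by rw [← hQP1]; exact hQR.symm
  have hRP1 : R ≠ Q + 1 := by rw [hQ1P]; exact hPR.symm
  -- sigP P a = (P+1)^γ1 * R^δ1
  have hσPdvd : sigP P a ∣ C u * (P ^ a * Q ^ b * R ^ e) := by
    rw [← heq]
    exact Dvd.intro (sigP Q b * sigP R e) (by ring)
  obtain ⟨γ1, δ1, hrep1⟩ := rep2 (sigP_monic hP ha)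
    (fun π h1 h2 h3 => by
      rcases hω π h1 h2 (h3.trans hσPdvd) with hh | hh | hh
      · exact absurd (hh ▸ h3) (not_P_dvd_sigP hP a)
      · exact Or.inl (by rw [hh, hQP1])
      · exact Or.inr hh)
  have hnR1 : ¬ R ∣ sigP P a := R_not_dvd_sigP hP hQ' hR hRQ1 ha hrep1
  have hδ1 : δ1 = 0 := by
    by_contra hc
    exact hnR1 (by rw [hrep1]; exact dvd_mul_of_dvd_right (dvd_pow_self R hc) _)
  have hσP : sigP P a = (P + 1) ^ γ1 := by rw [hrep1, hδ1, pow_zero, mul_one]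
  -- sigP Q b = (Q+1)^γ2 * R^δ2
  have hσQdvd : sigP Q b ∣ C u * (P ^ a * Q ^ b * R ^ e) := by
    rw [← heq]
    exact Dvd.intro (sigP P a * sigP R e) (by ring)
  obtain ⟨γ2, δ2, hrep2⟩ := rep2 (sigP_monic hQ hb)
    (fun π h1 h2 h3 => by
      rcases hω π h1 h2 (h3.trans hσQdvd) with hh | hh | hh
      · exact Or.inl (by rw [hh, ← hQ1P])
      · exact absurd (hh ▸ h3) (not_P_dvd_sigP hQ b)
      · exact Or.inr hh)
  have hnR2 : ¬ R ∣ sigP Q b := R_not_dvd_sigP hQ hP' hR hRP1 hb hrep2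
  have hδ2 : δ2 = 0 := by
    by_contra hc
    exact hnR2 (by rw [hrep2]; exact dvd_mul_of_dvd_right (dvd_pow_self R hc) _)
  have hσQ : sigP Q b = (Q + 1) ^ γ2 := by rw [hrep2, hδ2, pow_zero, mul_one]
  -- R divides the RHS but not the LHS
  have hRA : R ∣ C u * (P ^ a * Q ^ b * R ^ e) := by
    rw [dvd_unit_mul_right hu]
    exact dvd_mul_of_dvd_right (dvd_pow_self R (by omega)) _
  rw [← heq] at hRA
  rcases (hR.prime.dvd_mul).mp hRA with hc | hc
  · rcases (hR.prime.dvd_mul).mp hc with hc2 | hc2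
    · rw [hσP] at hc2
      have := mi_dvd_mi hR hQ' (hR.prime.dvd_of_dvd_pow hc2)
      exact hRQ1 this
    · rw [hσQ, hQ1P] at hc2
      have := mi_dvd_mi hR hP (hR.prime.dvd_of_dvd_pow hc2)
      exact hPR this.symm
  · exact (not_P_dvd_sigP hR e) hc

end Chunk6a

section Chunk6b

lemma XsubC_ne {c d : F4} (h : c ≠ d) : (X - C c : F4[X]) ≠ X - C d := by
  intro heq
  exact h (Polynomial.C_injective (by linear_combination -heq))

lemma assemble {P Q R : F4[X]} (hP : MI P) (hQ : MI Q) (hR : MI R)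
    (hPQ : P ≠ Q) (hPR : P ≠ R) (hQR : Q ≠ R)
    (hminQ : P.natDegree ≤ Q.natDegree) (hminR : P.natDegree ≤ R.natDegree)
    {u : F4} (hu : u ≠ 0) {a b e : ℕ} (ha : 1 ≤ a) (hb : 1 ≤ b) (he : 1 ≤ e)
    (heq : sigP P a * sigP Q b * sigP R e = C u * (P ^ a * Q ^ b * R ^ e))
    (hω : ∀ π : F4[X], π.Monic → Irreducible π → π ∣ C u * (P ^ a * Q ^ b * R ^ e) →
      π = P ∨ π = Q ∨ π = R) : False := by
  have hσPdvd : sigP P a ∣ C u * (P ^ a * Q ^ b * R ^ e) := by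
    rw [← heq]
    exact Dvd.intro (sigP Q b * sigP R e) (by ring)
  have hP1A : (P + 1) ∣ C u * (P ^ a * Q ^ b * R ^ e) := (P1_dvd_sigP hP ha).trans hσPdvd
  obtain ⟨i, j, k, hijk⟩ := rep3 (monic_P1 hP)
    (fun π h1 h2 h3 => hω π h1 h2 (h3.trans hP1A))
  have hi0 : i = 0 := by
    by_contra hc
    have hPd : P ∣ P + 1 := (dvd_pow_self P hc).trans
      (by rw [hijk]; exact Dvd.intro (Q ^ j * R ^ k) (by ring))
    have hP1 : P ∣ (1 : F4[X]) := by
      have := dvd_sub hPd (dvd_refl P)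
      simpa using this
    exact hP.not_unit (isUnit_of_dvd_one hP1)
  rw [hi0, pow_zero, one_mul] at hijk
  -- degree analysis
  have hdeg : P.natDegree = j * Q.natDegree + k * R.natDegree := by
    have h1 := congrArg Polynomial.natDegree hijk
    rwa [natDegree_P1 hP, Polynomial.Monic.natDegree_mul (hQ.monic.pow j) (hR.monic.pow k),
      Polynomial.natDegree_pow, Polynomial.natDegree_pow] at h1
  have hp1 := hP.natDegree_pos
  have hq1 := hQ.natDegree_pos
  have hr1 := hR.natDegree_pos
  rcases Nat.eq_zero_or_pos j with hj | hj
  · rcases Nat.eq_zero_or_pos k with hk | hk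
    · -- P + 1 = 1: impossible
      rw [hj, hk] at hdeg
      simp at hdeg
      omega
    · -- P + 1 = R ^ k with k = 1
      have hkq : k * R.natDegree ≤ P.natDegree := by omega
      have hk1 : k = 1 := by
        by_contra hk2
        have h2 : 2 ≤ k := by omega
        have : 2 * R.natDegree ≤ k * R.natDegree := Nat.mul_le_mul_right _ h2
        omega
      have hPR1 : P + 1 = R := by
        rw [hijk, hj, hk1]
        simp
      -- apply main_contra with (P, R, Q)
      have heq' : sigP P a * sigP R e * sigP Q b = C u * (P ^ a * R ^ e * Q ^ b) := by
        linear_combination heq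
      have hω' : ∀ π : F4[X], π.Monic → Irreducible π →
          π ∣ C u * (P ^ a * R ^ e * Q ^ b) → π = P ∨ π = R ∨ π = Q := by
        intro π h1 h2 h3
        have h3' : π ∣ C u * (P ^ a * Q ^ b * R ^ e) := by
          rw [show C u * (P ^ a * Q ^ b * R ^ e) = C u * (P ^ a * R ^ e * Q ^ b) from by ring]
          exact h3
        rcases hω π h1 h2 h3' with h | h | h
        · exact Or.inl h
        · exact Or.inr (Or.inr h)
        · exact Or.inr (Or.inl h)
      exact main_contra hP hR hQ hPR hPQ hQR.symm hPR1.symm hu ha he hb heq' hω'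
  · rcases Nat.eq_zero_or_pos k with hk | hk
    · -- P + 1 = Q ^ j with j = 1
      have hjq : j * Q.natDegree ≤ P.natDegree := by omega
      have hj1 : j = 1 := by
        by_contra hj2
        have h2 : 2 ≤ j := by omega
        have : 2 * Q.natDegree ≤ j * Q.natDegree := Nat.mul_le_mul_right _ h2
        omega
      have hPQ1 : P + 1 = Q := by
        rw [hijk, hj1, hk]
        simp
      exact main_contra hP hQ hR hPQ hPR hQR hPQ1.symm hu ha hb he heq hω
    · -- both j, k ≥ 1: degree too large
      have hjq : Q.natDegree ≤ j * Q.natDegree := Nat.le_mul_of_pos_left _ hj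
      have hkr : R.natDegree ≤ k * R.natDegree := Nat.le_mul_of_pos_left _ hk
      omega

end Chunk6b

theorem stmt14 : ¬ ∃ A : F4[X], IsBUPerfect A ∧ omegaCount A = 3 := by
  rintro ⟨A, hperf, hω3⟩
  obtain ⟨P, Q, R, hPQ, hPR, hQR, hset⟩ := Set.ncard_eq_three.mp hω3
  have hmem : ∀ x : F4[X], (x.Monic ∧ Irreducible x ∧ x ∣ A) ↔ (x = P ∨ x = Q ∨ x = R) := by
    intro x
    constructor
    · intro hx
      have h1 : x ∈ {y : F4[X] | y.Monic ∧ Irreducible y ∧ y ∣ A} := hx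
      rw [hset] at h1
      simpa using h1
    · intro hx
      have h1 : x ∈ ({P, Q, R} : Set F4[X]) := by simpa using hx
      rw [← hset] at h1
      exact h1
  -- A is nonzero
  have hA0 : A ≠ 0 := by
    intro hA
    subst hA
    obtain ⟨c, hc0, hc1⟩ : ∃ c : F4, c ≠ 0 ∧ c ≠ 1 := by
      by_contra hcon
      push_neg at hcon
      have hsub : (Finset.univ : Finset F4) ⊆ {0, 1} := by
        intro c _
        rcases eq_or_ne c 0 with h | h
        · simp [h]
        · simp [hcon c h]
      have h1 := Finset.card_le_card hsub
      have h2 : ({0, 1} : Finset F4).card ≤ 2 := by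
        apply le_trans (Finset.card_insert_le _ _)
        simp
      rw [Finset.card_univ, F4card] at h1
      omega
    have hc01 : c + 1 ≠ 0 := fun h => hc1 (by linear_combination h - CharTwo.two_eq_zero (R := F4))
    have hc11 : c + 1 ≠ 1 := fun h => hc0 (by linear_combination h)
    have hmem4 : ∀ d : F4, (X - C d : F4[X]) = P ∨ (X - C d : F4[X]) = Q ∨
        (X - C d : F4[X]) = R := fun d =>
      (hmem _).mp ⟨monic_X_sub_C d, irreducible_X_sub_C d, dvd_zero _⟩
    set s : Finset F4[X] := {X - C 0, X - C 1, X - C c, X - C (c + 1)} with hs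
    have hsub : s ⊆ {P, Q, R} := by
      intro z hz
      rw [hs] at hz
      simp only [Finset.mem_insert, Finset.mem_singleton] at hz
      simp only [Finset.mem_insert, Finset.mem_singleton]
      rcases hz with rfl | rfl | rfl | rfl
      · exact hmem4 0
      · exact hmem4 1
      · exact hmem4 c
      · exact hmem4 (c + 1)
    have hcard_s : s.card = 4 := by
      rw [hs]
      rw [Finset.card_insert_of_notMem, Finset.card_insert_of_notMem,
        Finset.card_insert_of_notMem, Finset.card_singleton]
      · simp only [Finset.mem_singleton]
        exact XsubC_ne (fun h => one_ne_zero (α := F4) (by linear_combination -h))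
      · simp only [Finset.mem_insert, Finset.mem_singleton]
        push_neg
        exact ⟨XsubC_ne (fun h => hc1 h.symm), XsubC_ne (fun h => hc11 h.symm)⟩
      · simp only [Finset.mem_insert, Finset.mem_singleton]
        push_neg
        exact ⟨XsubC_ne (fun h => one_ne_zero h.symm),
          XsubC_ne (fun h => hc0 h.symm), XsubC_ne (fun h => hc01 h.symm)⟩
    have hcard_t : ({P, Q, R} : Finset F4[X]).card ≤ 3 := by
      apply le_trans (Finset.card_insert_le _ _)
      have := Finset.card_insert_le Q ({R} : Finset F4[X])
      simp only [Finset.card_singleton] at this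
      omega
    have := Finset.card_le_card hsub
    omega
  -- the three primes
  obtain ⟨hPm, hPi, hPd⟩ := (hmem P).mpr (Or.inl rfl)
  obtain ⟨hQm, hQi, hQd⟩ := (hmem Q).mpr (Or.inr (Or.inl rfl))
  obtain ⟨hRm, hRi, hRd⟩ := (hmem R).mpr (Or.inr (Or.inr rfl))
  have hPmi : MI P := ⟨hPm, hPi⟩
  have hQmi : MI Q := ⟨hQm, hQi⟩
  have hRmi : MI R := ⟨hRm, hRi⟩
  -- factorization of A
  obtain ⟨a, b, e, hprodA⟩ := multiset_prod_three (P := P) (Q := Q) (R := R)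
    (UniqueFactorizationMonoid.normalizedFactors A)
    (fun x hx => (hmem x).mp ⟨(nf_mi hx).1.monic, (nf_mi hx).1.irr, (nf_mi hx).2⟩)
  obtain ⟨w, hw⟩ := UniqueFactorizationMonoid.prod_normalizedFactors hA0
  obtain ⟨u, huu, huC⟩ := Polynomial.isUnit_iff.mp w.isUnit
  have hu0 : u ≠ 0 := huu.ne_zero
  have hA : A = C u * (P ^ a * Q ^ b * R ^ e) := by
    rw [← hw, hprodA, ← huC]
    ring
  -- exponents positive
  have hstrip : ∀ π : F4[X], π ∣ A → π ∣ P ^ a * Q ^ b * R ^ e := by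
    intro π h
    rw [hA, dvd_unit_mul_right hu0] at h
    exact h
  have ha : 1 ≤ a := by
    by_contra hc
    have ha0 : a = 0 := by omega
    have h1 := hstrip P hPd
    rw [ha0, pow_zero, one_mul] at h1
    rcases hPmi.prime.dvd_mul.mp h1 with h2 | h2
    · exact hPQ (mi_dvd_mi hPmi hQmi (hPmi.prime.dvd_of_dvd_pow h2))
    · exact hPR (mi_dvd_mi hPmi hRmi (hPmi.prime.dvd_of_dvd_pow h2))
  have hb : 1 ≤ b := by
    by_contra hc
    have hb0 : b = 0 := by omega
    have h1 := hstrip Q hQd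
    rw [hb0, pow_zero, mul_one] at h1
    rcases hQmi.prime.dvd_mul.mp h1 with h2 | h2
    · exact hPQ.symm (mi_dvd_mi hQmi hPmi (hQmi.prime.dvd_of_dvd_pow h2))
    · exact hQR (mi_dvd_mi hQmi hRmi (hQmi.prime.dvd_of_dvd_pow h2))
  have he : 1 ≤ e := by
    by_contra hc
    have he0 : e = 0 := by omega
    have h1 := hstrip R hRd
    rw [he0, pow_zero, mul_one] at h1
    rcases hRmi.prime.dvd_mul.mp h1 with h2 | h2
    · exact hPR.symm (mi_dvd_mi hRmi hPmi (hRmi.prime.dvd_of_dvd_pow h2))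
    · exact hQR.symm (mi_dvd_mi hRmi hQmi (hRmi.prime.dvd_of_dvd_pow h2))
  -- the sigma equation
  have heq : sigP P a * sigP Q b * sigP R e = C u * (P ^ a * Q ^ b * R ^ e) := by
    calc sigP P a * sigP Q b * sigP R e
        = sigmaBU (C u * (P ^ a * Q ^ b * R ^ e)) :=
          (sigmaBU_formula hPmi hQmi hRmi hPQ hPR hQR hu0 a b e).symm
      _ = sigmaBU A := by rw [← hA]
      _ = A := hperf
      _ = C u * (P ^ a * Q ^ b * R ^ e) := hA
  have hωA : ∀ π : F4[X], π.Monic → Irreducible π →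
      π ∣ C u * (P ^ a * Q ^ b * R ^ e) → π = P ∨ π = Q ∨ π = R := by
    intro π h1 h2 h3
    exact (hmem π).mp ⟨h1, h2, by rw [hA]; exact h3⟩
  -- minimal degree case analysis
  rcases le_total P.natDegree Q.natDegree with h1 | h1
  · rcases le_total P.natDegree R.natDegree with h2 | h2
    · exact assemble hPmi hQmi hRmi hPQ hPR hQR h1 h2 hu0 ha hb he heq hωA
    · -- R is minimal : (R, P, Q)
      have heq' : sigP R e * sigP P a * sigP Q b = C u * (R ^ e * P ^ a * Q ^ b) := by
        linear_combination heq
      have hω' : ∀ π : F4[X], π.Monic → Irreducible π →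
          π ∣ C u * (R ^ e * P ^ a * Q ^ b) → π = R ∨ π = P ∨ π = Q := by
        intro π p1 p2 p3
        have p3' : π ∣ C u * (P ^ a * Q ^ b * R ^ e) := by
          rw [show C u * (P ^ a * Q ^ b * R ^ e) = C u * (R ^ e * P ^ a * Q ^ b) from by ring]
          exact p3
        rcases hωA π p1 p2 p3' with h | h | h
        · exact Or.inr (Or.inl h)
        · exact Or.inr (Or.inr h)
        · exact Or.inl h
      exact assemble hRmi hPmi hQmi hPR.symm hQR.symm hPQ h2 (le_trans h2 h1)
        hu0 he ha hb heq' hω'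
  · rcases le_total Q.natDegree R.natDegree with h2 | h2
    · -- Q is minimal : (Q, P, R)
      have heq' : sigP Q b * sigP P a * sigP R e = C u * (Q ^ b * P ^ a * R ^ e) := by
        linear_combination heq
      have hω' : ∀ π : F4[X], π.Monic → Irreducible π →
          π ∣ C u * (Q ^ b * P ^ a * R ^ e) → π = Q ∨ π = P ∨ π = R := by
        intro π p1 p2 p3
        have p3' : π ∣ C u * (P ^ a * Q ^ b * R ^ e) := by
          rw [show C u * (P ^ a * Q ^ b * R ^ e) = C u * (Q ^ b * P ^ a * R ^ e) from by ring]
          exact p3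
        rcases hωA π p1 p2 p3' with h | h | h
        · exact Or.inr (Or.inl h)
        · exact Or.inl h
        · exact Or.inr (Or.inr h)
      exact assemble hQmi hPmi hRmi hPQ.symm hQR hPR h1 h2 hu0 hb ha he heq' hω'
    · -- R is minimal : (R, P, Q)
      have heq' : sigP R e * sigP P a * sigP Q b = C u * (R ^ e * P ^ a * Q ^ b) := by
        linear_combination heq
      have hω' : ∀ π : F4[X], π.Monic → Irreducible π →
          π ∣ C u * (R ^ e * P ^ a * Q ^ b) → π = R ∨ π = P ∨ π = Q := by
        intro π p1 p2 p3
        have p3' : π ∣ C u * (P ^ a * Q ^ b * R ^ e) := by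
          rw [show C u * (P ^ a * Q ^ b * R ^ e) = C u * (R ^ e * P ^ a * Q ^ b) from by ring]
          exact p3
        rcases hωA π p1 p2 p3' with h | h | h
        · exact Or.inr (Or.inl h)
        · exact Or.inr (Or.inr h)
        · exact Or.inl h
      exact assemble hRmi hPmi hQmi hPR.symm hQR.symm hPQ (le_trans h2 h1) h2
        hu0 he ha hb heq' hω'

end
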